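/- Jacobi's triple product identity: ∏_{k≥1} (1-q^{2k})(1+q^{2k-1} z)(1+q^{2k-1} z^{-1}) = ∑_{m∈ℤ} q^{m^2} z^m, as an identity of formal Laurent series. -/

import Mathlib

open PowerSeries LaurentPolynomial

namespace JTP

noncomputable section

abbrev R := LaurentPolynomial ℤ
abbrev S := PowerSeries R

/-- Gaussian binomial coefficient `[n, k]` in the variable `X ^ 2`, as a power series. -/
noncomputable def gb : ℕ → ℤ → S
  | 0, k => if k = 0 then 1 else 0
  | (n+1), k => gb n k + X ^ (2 * (n + 1 - k)).toNat * gb n (k - 1)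

lemma gb_neg (n : ℕ) : ∀ k : ℤ, k < 0 → gb n k = 0 := by
  induction n with
  | zero => intro k hk; simp [gb]; omega
  | succ n ih => intro k hk; simp [gb, ih k hk, ih (k-1) (by omega)]

lemma gb_gt (n : ℕ) : ∀ k : ℤ, (n : ℤ) < k → gb n k = 0 := by
  induction n with
  | zero => intro k hk; simp [gb]; omega
  | succ n ih =>
    intro k hk
    simp [gb, ih k (by omega), ih (k-1) (by push_cast at hk ⊢; omega)]

lemma gb_zero (n : ℕ) : gb n 0 = 1 := by
  induction n with
  | zero => simp [gb]
  | succ n ih => simp [gb, ih, gb_neg n (-1) (by omega)]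

/-- The ratio identity `(1 - t^k) [n,k] = (1 - t^{n+1-k}) [n,k-1]` with `t = X^2`. -/
lemma gb_ratio (n : ℕ) : ∀ k : ℤ,
    (1 - X ^ (2 * k).toNat) * gb n k
      = (1 - (X : S) ^ (2 * ((n : ℤ) + 1 - k)).toNat) * gb n (k - 1) := by
  induction n with
  | zero =>
    intro k
    rcases eq_or_ne k 0 with rfl | h0
    · simp [gb]
    · rcases eq_or_ne k 1 with rfl | h1
      · simp [gb]
      · simp [gb, h0, sub_eq_zero, show k - 1 ≠ 0 by omega]
  | succ n ih =>
    intro k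
    rcases lt_trichotomy k 0 with hk | rfl | hk
    · rw [gb_neg _ k hk, gb_neg _ (k-1) (by omega), mul_zero, mul_zero]
    · rw [show (2:ℤ) * 0 = 0 by ring, Int.toNat_zero, pow_zero, sub_self, zero_mul,
        gb_neg _ (0-1) (by omega), mul_zero]
    · rcases le_or_gt k ((n:ℤ)+1) with hk2 | hk2
      · -- main case 1 ≤ k ≤ n+1 ; write k = K+1, n = K+J
        obtain ⟨K, hK⟩ : ∃ K : ℕ, k = (K:ℤ) + 1 := ⟨(k-1).toNat, by omega⟩
        obtain ⟨J, hJ⟩ : ∃ J : ℕ, n = K + J := ⟨n - K, by omega⟩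
        subst hK hJ
        have h1 := ih ((K:ℤ)+1)
        have h2 := ih (K:ℤ)
        rw [show (2 * ((K:ℤ)+1)).toNat = 2*K+2 by omega,
          show (2 * (((K+J:ℕ):ℤ) + 1 - ((K:ℤ)+1))).toNat = 2*J by push_cast; omega] at h1
        rw [show (2 * (K:ℤ)).toNat = 2*K by omega,
          show (2 * (((K+J:ℕ):ℤ) + 1 - (K:ℤ))).toNat = 2*J+2 by push_cast; omega] at h2
        show (1 - X ^ (2 * ((K:ℤ)+1)).toNat) * gb (K+J+1) ((K:ℤ)+1)
          = (1 - (X:S) ^ (2 * (((K+J+1:ℕ):ℤ) + 1 - ((K:ℤ)+1))).toNat) * gb (K+J+1) ((K:ℤ)+1-1)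
        rw [show (2 * ((K:ℤ)+1)).toNat = 2*K+2 by omega,
          show (2 * (((K+J+1:ℕ):ℤ) + 1 - ((K:ℤ)+1))).toNat = 2*J+2 by push_cast; omega]
        show (1 - X ^ (2*K+2)) *
            (gb (K+J) ((K:ℤ)+1) + X ^ (2 * (((K+J:ℕ):ℤ) + 1 - ((K:ℤ)+1))).toNat * gb (K+J) ((K:ℤ)+1-1))
          = (1 - (X:S) ^ (2*J+2)) *
            (gb (K+J) ((K:ℤ)+1-1) + X ^ (2 * (((K+J:ℕ):ℤ) + 1 - ((K:ℤ)+1-1))).toNat * gb (K+J) ((K:ℤ)+1-1-1))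
        rw [show (2 * (((K+J:ℕ):ℤ) + 1 - ((K:ℤ)+1))).toNat = 2*J by push_cast; omega,
          show (2 * (((K+J:ℕ):ℤ) + 1 - ((K:ℤ)+1-1))).toNat = 2*J+2 by push_cast; omega]
        rw [show (K:ℤ)+1-1 = (K:ℤ) by ring] at h1 ⊢
        linear_combination h1 + (X:S)^(2*J+2) * h2
      · -- k ≥ n+2
        rcases eq_or_ne k ((n:ℤ)+2) with rfl | hne
        · rw [gb_gt (n+1) _ (by push_cast; omega),
            show (2 * (((n+1:ℕ):ℤ) + 1 - ((n:ℤ)+2))).toNat = 0 by push_cast; omega]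
          simp
        · rw [gb_gt (n+1) _ (by push_cast; omega), gb_gt (n+1) (k-1) (by push_cast; omega)]
          simp

lemma gb_A (n : ℕ) (k : ℤ) :
    gb (n+1) k = gb n k + X ^ (2 * ((n:ℤ) + 1 - k)).toNat * gb n (k - 1) := rfl

lemma gb_B (n : ℕ) (k : ℤ) :
    gb (n+1) k = X ^ (2 * k).toNat * gb n k + gb n (k - 1) := by
  rw [gb_A]
  linear_combination gb_ratio n k

lemma gb_symm (n : ℕ) : ∀ k : ℤ, gb n ((n:ℤ) - k) = gb n k := by
  induction n with
  | zero =>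
    intro k
    rcases eq_or_ne k 0 with rfl | h
    · simp [gb]
    · simp [gb, h, show (0:ℤ) - k ≠ 0 by omega]
  | succ n ih =>
    intro k
    rcases lt_or_ge k 0 with hk | hk
    · rw [gb_neg (n+1) k hk, gb_A,
        gb_gt n _ (by push_cast; omega), gb_gt n _ (by push_cast; omega)]
      simp
    · rw [gb_A, gb_B n k,
        show ((n:ℤ) + 1 - (((n+1:ℕ):ℤ) - k)) = k by push_cast; ring,
        show (((n+1:ℕ):ℤ) - k) = (n:ℤ) - (k-1) by push_cast; ring,
        show ((n:ℤ) - (k-1)) - 1 = (n:ℤ) - k by ring, ih (k-1), ih k]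
      ring

lemma gb_telescope (n : ℕ) : ∀ k : ℕ, k ≤ n →
    gb n (k:ℤ) * ∏ j ∈ Finset.Icc 1 k, (1 - (X:S) ^ (2*j))
      = ∏ j ∈ Finset.Icc (n-k+1) n, (1 - (X:S) ^ (2*j)) := by
  intro k
  induction k with
  | zero => simp [gb_zero]
  | succ k ih =>
    intro hk
    have hins : Finset.Icc (n-(k+1)+1) n = insert (n-k) (Finset.Icc (n-k+1) n) := by
      ext x; simp; omega
    have hmem : n-k ∉ Finset.Icc (n-k+1) n := by simp
    rw [Finset.prod_Icc_succ_top (by omega : 1 ≤ k+1), hins, Finset.prod_insert hmem]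
    have hr := gb_ratio n ((k:ℤ)+1)
    rw [show (2 * ((k:ℤ)+1)).toNat = 2*(k+1) by omega,
      show (2 * ((n:ℤ) + 1 - ((k:ℤ)+1))).toNat = 2*(n-k) by omega,
      show ((k:ℤ)+1-1) = (k:ℤ) by ring] at hr
    push_cast
    linear_combination (∏ j ∈ Finset.Icc 1 k, (1 - (X:S)^(2*j))) * hr
      + (1 - (X:S)^(2*(n-k))) * ih (by omega)


/-- The key recurrence for the inductive step. -/
lemma gb_star (N : ℕ) (m : ℤ) :
    gb (2*N+2) ((N:ℤ)+1+m)
      = (1 + X^(2*(2*N+1))) * gb (2*N) ((N:ℤ)+m)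
        + X^((2*((N:ℤ)+1-m)).toNat) * gb (2*N) ((N:ℤ)+m-1)
        + X^((2*((N:ℤ)+1+m)).toNat) * gb (2*N) ((N:ℤ)+m+1) := by
  have hD : (X ^ (2*((N:ℤ)+1-m)).toNat - (X:S) ^ (2*(2*N+1))) * gb (2*N) ((N:ℤ)+m)
      = (X ^ (2*((N:ℤ)+1-m)).toNat - X ^ ((2*((N:ℤ)+1-m)).toNat * 2)) * gb (2*N) ((N:ℤ)+m-1) := by
    rcases lt_or_ge m (-(N:ℤ)) with hm | hm
    · rw [gb_neg _ _ (by omega), gb_neg _ _ (by omega), mul_zero, mul_zero]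
    rcases lt_or_ge ((N:ℤ)+1) m with hm2 | hm2
    · rw [gb_gt _ _ (by omega), gb_gt _ _ (by omega), mul_zero, mul_zero]
    -- main range : write N+m = a, N+1-m = c with a + c = 2N+1
    obtain ⟨a, ha⟩ : ∃ a : ℕ, (N:ℤ) + m = a := ⟨((N:ℤ)+m).toNat, by omega⟩
    obtain ⟨c, hc⟩ : ∃ c : ℕ, a + c = 2*N+1 := ⟨2*N+1-a, by omega⟩
    have hr := gb_ratio (2*N) ((N:ℤ)+m)
    rw [show (2*((N:ℤ)+m)).toNat = 2*a by omega,
      show (2*(((2*N:ℕ):ℤ)+1-((N:ℤ)+m))).toNat = 2*c by push_cast; omega] at hr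
    rw [show (2*((N:ℤ)+1-m)).toNat = 2*c by omega, show 2*(2*N+1) = 2*(a+c) by omega]
    linear_combination (X:S)^(2*c) * hr
  have e1 : gb (2*N+2) ((N:ℤ)+1+m)
      = gb (2*N+1) ((N:ℤ)+1+m) + X^((2*((N:ℤ)+1-m)).toNat) * gb (2*N+1) ((N:ℤ)+m) := by
    rw [show 2*N+2 = (2*N+1)+1 from rfl, gb_A]
    rw [show (((2*N+1:ℕ):ℤ) + 1 - ((N:ℤ)+1+m)) = (N:ℤ)+1-m by push_cast; ring,
      show ((N:ℤ)+1+m-1) = (N:ℤ)+m by ring]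
  have e2 : gb (2*N+1) ((N:ℤ)+1+m)
      = X^((2*((N:ℤ)+1+m)).toNat) * gb (2*N) ((N:ℤ)+1+m) + gb (2*N) ((N:ℤ)+m) := by
    rw [show 2*N+1 = (2*N)+1 from rfl, gb_B, show ((N:ℤ)+1+m-1) = (N:ℤ)+m by ring]
  have e3 : gb (2*N+1) ((N:ℤ)+m)
      = gb (2*N) ((N:ℤ)+m) + X^((2*((N:ℤ)+1-m)).toNat) * gb (2*N) ((N:ℤ)+m-1) := by
    rw [show 2*N+1 = (2*N)+1 from rfl, gb_A,
      show (((2*N:ℕ):ℤ) + 1 - ((N:ℤ)+m)) = (N:ℤ)+1-m by push_cast; ring]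
  rw [e1, e2, e3, show ((N:ℤ)+1+m) = (N:ℤ)+m+1 by ring]
  linear_combination hD + (pow_mul (X:S) ((2*((N:ℤ)+1-m)).toNat) 2) * gb (2*N) ((N:ℤ)+m-1)

lemma sum_ext2 (a b a' b' : ℤ) (ha : a' ≤ a) (hb : b ≤ b') (F : ℤ → S)
    (h : ∀ m, m < a ∨ b < m → F m = 0) :
    ∑ m ∈ Finset.Icc a b, F m = ∑ m ∈ Finset.Icc a' b', F m := by
  apply Finset.sum_subset (Finset.Icc_subset_Icc ha hb)
  intro x hx hx'
  simp only [Finset.mem_Icc] at hx hx'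
  exact h x (by omega)

lemma sum_ext (N : ℕ) (a b : ℤ) (ha : a ≤ -(N:ℤ)) (hb : (N:ℤ) ≤ b) :
    ∑ m ∈ Finset.Icc (-(N:ℤ)) (N:ℤ), gb (2*N) ((N:ℤ)+m) * X ^ (m^2).toNat * PowerSeries.C (R := R) (T m)
      = ∑ m ∈ Finset.Icc a b, gb (2*N) ((N:ℤ)+m) * X ^ (m^2).toNat * PowerSeries.C (R := R) (T m) := by
  apply Finset.sum_subset (Finset.Icc_subset_Icc ha hb)
  intro x hx hx'
  simp only [Finset.mem_Icc] at hx hx'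
  rcases lt_or_ge x (-(N:ℤ)) with h | h
  · rw [gb_neg _ _ (by omega), zero_mul, zero_mul]
  · rw [gb_gt _ _ (by push_cast; omega), zero_mul, zero_mul]

lemma prod_eq (N : ℕ) :
    ∏ j ∈ Finset.Icc 1 N, ((1 + PowerSeries.C (R := R) (T 1) * X ^ (2*j-1)) * (1 + PowerSeries.C (R := R) (T (-1)) * X ^ (2*j-1)))
      = ∑ m ∈ Finset.Icc (-(N:ℤ)) (N:ℤ), gb (2*N) ((N:ℤ)+m) * X ^ (m^2).toNat * PowerSeries.C (R := R) (T m) := by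
  induction N with
  | zero => simp [gb_zero]
  | succ N ih =>
    rw [Finset.prod_Icc_succ_top (by omega : 1 ≤ N+1), ih,
      sum_ext N (-((N:ℤ)+1)) ((N:ℤ)+1) (by omega) (by omega)]
    have hfactor : ((1 + PowerSeries.C (R := R) (T 1) * X ^ (2*(N+1)-1)) * (1 + PowerSeries.C (R := R) (T (-1)) * X ^ (2*(N+1)-1)) : S)
        = 1 + PowerSeries.C (R := R) (T 1) * X ^ (2*N+1) + PowerSeries.C (R := R) (T (-1)) * X ^ (2*N+1) + X ^ (2*(2*N+1)) := by
      rw [show 2*(N+1)-1 = 2*N+1 by omega]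
      have hz : (PowerSeries.C (R := R) (T 1)) * (PowerSeries.C (R := R) (T (-1))) = 1 := by
        rw [← map_mul, ← T_add]; norm_num
      linear_combination (X:S)^(2*N+1) * (X:S)^(2*N+1) * hz
        + (pow_add (X:S) (2*N+1) (2*N+1)).symm
    rw [hfactor, mul_add, mul_add, mul_add, mul_one, Finset.sum_mul, Finset.sum_mul,
      Finset.sum_mul]
    have h0 : ∑ m ∈ Finset.Icc (-((N:ℤ)+1)) ((N:ℤ)+1),
          gb (2*N) ((N:ℤ)+m) * X ^ (m^2).toNat * PowerSeries.C (R := R) (T m)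
        = ∑ m ∈ Finset.Icc (-((N:ℤ)+2)) ((N:ℤ)+2),
            gb (2*N) ((N:ℤ)+m) * X ^ (m^2).toNat * PowerSeries.C (R := R) (T m) := by
      rw [← sum_ext N (-((N:ℤ)+1)) ((N:ℤ)+1) (by omega) (by omega),
        sum_ext N (-((N:ℤ)+2)) ((N:ℤ)+2) (by omega) (by omega)]
    have h3 : ∑ m ∈ Finset.Icc (-((N:ℤ)+1)) ((N:ℤ)+1),
          gb (2*N) ((N:ℤ)+m) * X ^ (m^2).toNat * PowerSeries.C (R := R) (T m) * X ^ (2*(2*N+1))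
        = ∑ m ∈ Finset.Icc (-((N:ℤ)+2)) ((N:ℤ)+2),
            gb (2*N) ((N:ℤ)+m) * X ^ ((m^2).toNat + 2*(2*N+1)) * PowerSeries.C (R := R) (T m) := by
      have e : ∀ m : ℤ, gb (2*N) ((N:ℤ)+m) * X ^ (m^2).toNat * PowerSeries.C (R := R) (T m) * X ^ (2*(2*N+1))
          = gb (2*N) ((N:ℤ)+m) * X ^ ((m^2).toNat + 2*(2*N+1)) * PowerSeries.C (R := R) (T m) := by
        intro m; rw [pow_add]; ring
      simp_rw [e]
      apply sum_ext2 _ _ _ _ (by omega) (by omega)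
      intro m hm
      rcases hm with h | h
      · rw [gb_neg _ _ (by omega), zero_mul, zero_mul]
      · rw [gb_gt _ _ (by push_cast; omega), zero_mul, zero_mul]
    have h1 : ∑ m ∈ Finset.Icc (-((N:ℤ)+1)) ((N:ℤ)+1),
          gb (2*N) ((N:ℤ)+m) * X ^ (m^2).toNat * PowerSeries.C (R := R) (T m) * (PowerSeries.C (R := R) (T 1) * X ^ (2*N+1))
        = ∑ m ∈ Finset.Icc (-((N:ℤ)+2)) ((N:ℤ)+2),
            gb (2*N) ((N:ℤ)+m-1) * X ^ ((2*((N:ℤ)+1-m)).toNat + (m^2).toNat) * PowerSeries.C (R := R) (T m) := by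
      have step : ∑ m ∈ Finset.Icc (-((N:ℤ)+1)) ((N:ℤ)+1),
            gb (2*N) ((N:ℤ)+m) * X ^ (m^2).toNat * PowerSeries.C (R := R) (T m) * (PowerSeries.C (R := R) (T 1) * X ^ (2*N+1))
          = ∑ m ∈ Finset.Icc (-(N:ℤ)) ((N:ℤ)+2),
              gb (2*N) ((N:ℤ)+m-1) * X ^ ((2*((N:ℤ)+1-m)).toNat + (m^2).toNat) * PowerSeries.C (R := R) (T m) := by
        apply Finset.sum_nbij' (fun m => m+1) (fun m => m-1)
        · intro a ha; simp only [Finset.mem_Icc] at *; omega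
        · intro a ha; simp only [Finset.mem_Icc] at *; omega
        · intro a _; ring
        · intro a _; ring
        · intro m hm
          simp only [Finset.mem_Icc] at hm
          rw [show (N:ℤ)+(m+1)-1 = (N:ℤ)+m by ring]
          rcases le_or_gt m (N:ℤ) with h | h
          · obtain ⟨A, hA⟩ : ∃ A:ℕ, ((m+1)^2 : ℤ) = A :=
              ⟨_, (Int.toNat_of_nonneg (sq_nonneg _)).symm⟩
            obtain ⟨B, hB⟩ : ∃ B:ℕ, (m^2:ℤ) = B :=
              ⟨_, (Int.toNat_of_nonneg (sq_nonneg _)).symm⟩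
            have hrel : 2*((N:ℤ)+1-(m+1)) + (A:ℤ) = (B:ℤ) + (2*N+1) := by
              rw [← hA, ← hB]; ring
            have hexp : (2*((N:ℤ)+1-(m+1))).toNat + ((m+1)^2).toNat
                = (m^2).toNat + (2*N+1) := by
              rw [hA, hB]; omega
            rw [hexp, T_add, map_mul, pow_add]; ring
          · rw [gb_gt _ _ (by push_cast; omega)]; simp
      rw [step]
      apply sum_ext2 _ _ _ _ (by omega) (by omega)
      intro m hm
      rcases hm with h | h
      · rw [gb_neg _ _ (by omega), zero_mul, zero_mul]
      · rw [gb_gt _ _ (by push_cast; omega), zero_mul, zero_mul]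
    have h2 : ∑ m ∈ Finset.Icc (-((N:ℤ)+1)) ((N:ℤ)+1),
          gb (2*N) ((N:ℤ)+m) * X ^ (m^2).toNat * PowerSeries.C (R := R) (T m) * (PowerSeries.C (R := R) (T (-1)) * X ^ (2*N+1))
        = ∑ m ∈ Finset.Icc (-((N:ℤ)+2)) ((N:ℤ)+2),
            gb (2*N) ((N:ℤ)+m+1) * X ^ ((2*((N:ℤ)+1+m)).toNat + (m^2).toNat) * PowerSeries.C (R := R) (T m) := by
      have step : ∑ m ∈ Finset.Icc (-((N:ℤ)+1)) ((N:ℤ)+1),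
            gb (2*N) ((N:ℤ)+m) * X ^ (m^2).toNat * PowerSeries.C (R := R) (T m) * (PowerSeries.C (R := R) (T (-1)) * X ^ (2*N+1))
          = ∑ m ∈ Finset.Icc (-((N:ℤ)+2)) (N:ℤ),
              gb (2*N) ((N:ℤ)+m+1) * X ^ ((2*((N:ℤ)+1+m)).toNat + (m^2).toNat) * PowerSeries.C (R := R) (T m) := by
        apply Finset.sum_nbij' (fun m => m-1) (fun m => m+1)
        · intro a ha; simp only [Finset.mem_Icc] at *; omega
        · intro a ha; simp only [Finset.mem_Icc] at *; omega
        · intro a _; ring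
        · intro a _; ring
        · intro m hm
          simp only [Finset.mem_Icc] at hm
          rw [show (N:ℤ)+(m-1)+1 = (N:ℤ)+m by ring]
          rcases le_or_gt (-(N:ℤ)) m with h | h
          · obtain ⟨A, hA⟩ : ∃ A:ℕ, ((m-1)^2 : ℤ) = A :=
              ⟨_, (Int.toNat_of_nonneg (sq_nonneg _)).symm⟩
            obtain ⟨B, hB⟩ : ∃ B:ℕ, (m^2:ℤ) = B :=
              ⟨_, (Int.toNat_of_nonneg (sq_nonneg _)).symm⟩
            have hrel : 2*((N:ℤ)+1+(m-1)) + (A:ℤ) = (B:ℤ) + (2*N+1) := by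
              rw [← hA, ← hB]; ring
            have hexp : (2*((N:ℤ)+1+(m-1))).toNat + ((m-1)^2).toNat
                = (m^2).toNat + (2*N+1) := by
              rw [hA, hB]; omega
            rw [hexp, show m-1 = m + (-1) by ring, T_add, map_mul, pow_add]; ring
          · rw [gb_neg _ _ (by omega)]; simp
      rw [step]
      apply sum_ext2 _ _ _ _ (by omega) (by omega)
      intro m hm
      rcases hm with h | h
      · rw [gb_neg _ _ (by omega), zero_mul, zero_mul]
      · rw [gb_gt _ _ (by push_cast; omega), zero_mul, zero_mul]
    rw [h0, h1, h2, h3, ← Finset.sum_add_distrib, ← Finset.sum_add_distrib,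
      ← Finset.sum_add_distrib]
    have final : ∀ m : ℤ,
        gb (2*N) ((N:ℤ)+m) * X ^ (m^2).toNat * PowerSeries.C (R := R) (T m)
          + gb (2*N) ((N:ℤ)+m-1) * X ^ ((2*((N:ℤ)+1-m)).toNat + (m^2).toNat) * PowerSeries.C (R := R) (T m)
          + gb (2*N) ((N:ℤ)+m+1) * X ^ ((2*((N:ℤ)+1+m)).toNat + (m^2).toNat) * PowerSeries.C (R := R) (T m)
          + gb (2*N) ((N:ℤ)+m) * X ^ ((m^2).toNat + 2*(2*N+1)) * PowerSeries.C (R := R) (T m)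
        = gb (2*N+2) ((N:ℤ)+1+m) * X ^ (m^2).toNat * PowerSeries.C (R := R) (T m) := by
      intro m
      have hs := gb_star N m
      linear_combination (-((X:S) ^ ((m^2).toNat) * PowerSeries.C (R := R) (T m))) * hs
    calc ∑ m ∈ Finset.Icc (-((N:ℤ)+2)) ((N:ℤ)+2),
            (gb (2*N) ((N:ℤ)+m) * X ^ (m^2).toNat * PowerSeries.C (R := R) (T m)
          + gb (2*N) ((N:ℤ)+m-1) * X ^ ((2*((N:ℤ)+1-m)).toNat + (m^2).toNat) * PowerSeries.C (R := R) (T m)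
          + gb (2*N) ((N:ℤ)+m+1) * X ^ ((2*((N:ℤ)+1+m)).toNat + (m^2).toNat) * PowerSeries.C (R := R) (T m)
          + gb (2*N) ((N:ℤ)+m) * X ^ ((m^2).toNat + 2*(2*N+1)) * PowerSeries.C (R := R) (T m))
        = ∑ m ∈ Finset.Icc (-((N:ℤ)+2)) ((N:ℤ)+2),
            gb (2*N+2) ((N:ℤ)+1+m) * X ^ (m^2).toNat * PowerSeries.C (R := R) (T m) :=
          Finset.sum_congr rfl fun m _ => final m
      _ = ∑ m ∈ Finset.Icc (-((N:ℤ)+1)) ((N:ℤ)+1),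
            gb (2*N+2) ((N:ℤ)+1+m) * X ^ (m^2).toNat * PowerSeries.C (R := R) (T m) := by
          refine (sum_ext2 _ _ _ _ (by omega) (by omega) _ ?_).symm
          intro m hm
          rcases hm with h | h
          · rw [gb_neg _ _ (by omega), zero_mul, zero_mul]
          · rw [gb_gt _ _ (by push_cast; omega), zero_mul, zero_mul]
      _ = ∑ m ∈ Finset.Icc (-((N+1:ℕ):ℤ)) ((N+1:ℕ):ℤ),
            gb (2*(N+1)) (((N+1:ℕ):ℤ)+m) * X ^ (m^2).toNat * PowerSeries.C (R := R) (T m) := by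
          rw [show 2*(N+1) = 2*N+2 by ring]
          push_cast
          rfl


lemma one_sub_prod (a : ℕ) (s : Finset ℕ) (h : ∀ j ∈ s, a ≤ j) :
    ∃ g : S, ∏ j ∈ s, (1 - (X:S) ^ (2*j)) = 1 + X ^ (2*a) * g := by
  induction s using Finset.cons_induction with
  | empty => exact ⟨0, by simp⟩
  | cons j s hj ih =>
    obtain ⟨g, hg⟩ := ih (fun x hx => h x (Finset.mem_cons.mpr (Or.inr hx)))
    obtain ⟨b, hb⟩ : ∃ b : ℕ, j = a + b := ⟨j - a, by have := h j (Finset.mem_cons_self j s); omega⟩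
    refine ⟨-(X ^ (2*b) * (1 + X ^ (2*a) * g)) + g, ?_⟩
    rw [Finset.prod_cons, hg, hb, show 2*(a+b) = 2*a + 2*b by ring, pow_add]
    ring

/-- `G * gb(2N, N+m) = 1 + X^(2(N - |m|) + 2) g`. -/
lemma G_mul_gb (N : ℕ) (m : ℤ) (hm : m.natAbs ≤ N) :
    ∃ g : S, (∏ k ∈ Finset.Icc 1 N, (1 - (X:S) ^ (2*k))) * gb (2*N) ((N:ℤ)+m)
      = 1 + X ^ (2*(N - m.natAbs + 1)) * g := by
  obtain ⟨k0, hk0⟩ : ∃ k0 : ℕ, N - m.natAbs = k0 := ⟨_, rfl⟩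
  rw [hk0]
  have hgb : gb (2*N) ((N:ℤ)+m) = gb (2*N) (k0:ℤ) := by
    rcases le_or_gt 0 m with h | h
    · rw [← gb_symm (2*N) ((N:ℤ)+m),
        show ((2*N:ℕ):ℤ) - ((N:ℤ)+m) = (k0:ℤ) by push_cast; omega]
    · rw [show (N:ℤ)+m = (k0:ℤ) by omega]
  have hsplit : (∏ k ∈ Finset.Icc 1 N, (1 - (X:S) ^ (2*k)))
      = (∏ k ∈ Finset.Icc 1 k0, (1 - (X:S) ^ (2*k))) * ∏ k ∈ Finset.Ioc k0 N, (1 - (X:S) ^ (2*k)) := by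
    rw [show Finset.Icc 1 N = Finset.Ioc 0 N by rw [← Finset.Icc_add_one_left_eq_Ioc]; rfl,
      show Finset.Icc 1 k0 = Finset.Ioc 0 k0 by rw [← Finset.Icc_add_one_left_eq_Ioc]; rfl]
    exact (Finset.prod_Ioc_consecutive _ (Nat.zero_le _) (by omega)).symm
  have ht := gb_telescope (2*N) k0 (by omega)
  obtain ⟨g1, hg1⟩ := one_sub_prod (k0+1) (Finset.Icc (2*N-k0+1) (2*N))
    (by intro j hj; simp at hj; omega)
  obtain ⟨g2, hg2⟩ := one_sub_prod (k0+1) (Finset.Ioc k0 N)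
    (by intro j hj; simp at hj; omega)
  refine ⟨g1 + g2 + X ^ (2*(k0+1)) * (g1 * g2), ?_⟩
  calc (∏ k ∈ Finset.Icc 1 N, (1 - (X:S) ^ (2*k))) * gb (2*N) ((N:ℤ)+m)
      = (gb (2*N) (k0:ℤ) * ∏ k ∈ Finset.Icc 1 k0, (1 - (X:S) ^ (2*k)))
        * ∏ k ∈ Finset.Ioc k0 N, (1 - (X:S) ^ (2*k)) := by rw [hgb, hsplit]; ring
    _ = (1 + X ^ (2*(k0+1)) * g1) * (1 + X ^ (2*(k0+1)) * g2) := by rw [ht, hg1, hg2]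
    _ = 1 + X ^ (2*(k0+1)) * (g1 + g2 + X ^ (2*(k0+1)) * (g1 * g2)) := by ring

lemma coeff_term (n : ℕ) (m : ℤ) (hm : m.natAbs ≤ n+1) :
    PowerSeries.coeff (R := R) n ((∏ k ∈ Finset.Icc 1 (n+1), (1 - (X:S)^(2*k)))
      * (gb (2*(n+1)) (((n+1:ℕ):ℤ)+m) * X ^ (m^2).toNat * PowerSeries.C (R := R) (T m)))
      = if m^2 = (n:ℤ) then T m else 0 := by
  obtain ⟨g, hg⟩ := G_mul_gb (n+1) m hm
  obtain ⟨a, ha⟩ : ∃ a:ℕ, m.natAbs = a := ⟨_, rfl⟩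
  have hsq : ((a^2 : ℕ) : ℤ) = m^2 := by rw [← ha]; exact_mod_cast Int.natAbs_sq m
  have hsq2 : ((a:ℤ))^2 = m^2 := by exact_mod_cast hsq
  have he : (m^2).toNat = a^2 := by omega
  have haa : a ≤ a^2 + 1 := by
    rcases Nat.eq_zero_or_pos a with rfl | hpos
    · simp
    · calc a = a*1 := (mul_one a).symm
        _ ≤ a*a := Nat.mul_le_mul_left a hpos
        _ = a^2 := (sq a).symm
        _ ≤ a^2 + 1 := by omega
  have hrw : (∏ k ∈ Finset.Icc 1 (n+1), (1 - (X:S)^(2*k)))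
      * (gb (2*(n+1)) (((n+1:ℕ):ℤ)+m) * X ^ (m^2).toNat * PowerSeries.C (R := R) (T m))
      = X ^ (a^2) * PowerSeries.C (R := R) (T m) + X ^ (2*(n+1-a+1) + a^2) * (g * PowerSeries.C (R := R) (T m)) := by
    calc (∏ k ∈ Finset.Icc 1 (n+1), (1 - (X:S)^(2*k)))
          * (gb (2*(n+1)) (((n+1:ℕ):ℤ)+m) * X ^ (m^2).toNat * PowerSeries.C (R := R) (T m))
        = ((∏ k ∈ Finset.Icc 1 (n+1), (1 - (X:S)^(2*k)))
            * gb (2*(n+1)) (((n+1:ℕ):ℤ)+m)) * (X ^ (m^2).toNat * PowerSeries.C (R := R) (T m)) := by ring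
      _ = (1 + X ^ (2*(n+1-m.natAbs+1)) * g) * (X ^ (a^2) * PowerSeries.C (R := R) (T m)) := by
          rw [hg, he]
      _ = X ^ (a^2) * PowerSeries.C (R := R) (T m) + X ^ (2*(n+1-a+1) + a^2) * (g * PowerSeries.C (R := R) (T m)) := by
          rw [ha, pow_add]; ring
  rw [hrw, map_add]
  have h2 : PowerSeries.coeff (R := R) n (X ^ (2*(n+1-a+1) + a^2) * (g * PowerSeries.C (R := R) (T m))) = 0 := by
    have hdvd : (X:S)^(n+1) ∣ X ^ (2*(n+1-a+1) + a^2) * (g * PowerSeries.C (R := R) (T m)) :=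
      dvd_mul_of_dvd_left (pow_dvd_pow X (by omega)) _
    exact X_pow_dvd_iff.mp hdvd n (by omega)
  rw [h2, add_zero]
  rcases le_or_gt (a^2) n with h | h
  · obtain ⟨d, hd⟩ : ∃ d, n = d + a^2 := ⟨n - a^2, by omega⟩
    rw [hd, coeff_X_pow_mul, coeff_C]
    by_cases hd0 : d = 0
    · subst hd0
      rw [if_pos rfl, if_pos (by push_cast; linarith [hsq2])]
    · rw [if_neg hd0, if_neg ?_]
      intro hc
      apply hd0
      have hdz : (d:ℤ) = 0 := by push_cast at hc; linarith [hsq2]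
      exact_mod_cast hdz
  · have hdvd : (X:S)^(n+1) ∣ X ^ (a^2) * PowerSeries.C (R := R) (T m) :=
      dvd_mul_of_dvd_left (pow_dvd_pow X (by omega)) _
    rw [X_pow_dvd_iff.mp hdvd n (by omega), if_neg]
    intro hc
    rw [← hsq] at hc
    have : a^2 = n := by exact_mod_cast hc
    omega

end

end JTP

open JTP in
/-- Jacobi's triple product identity, stated coefficientwise in the ring of power series in `q`
with coefficients in Laurent polynomials in `z`: for each `n`, the coefficient of `q^n` in
`∏_{k≥1} (1-q^{2k})(1+q^{2k-1}z)(1+q^{2k-1}z⁻¹)` (factors with `k > n+1` cannot affect this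
coefficient) equals `∑_{m ∈ ℤ, m^2 = n} z^m`. -/
theorem jacobi_triple_product (n : ℕ) :
    PowerSeries.coeff (R := LaurentPolynomial ℤ) n
      (∏ k ∈ Finset.Icc 1 (n + 1),
        ((1 - (PowerSeries.X : PowerSeries (LaurentPolynomial ℤ)) ^ (2 * k)) *
          (1 + PowerSeries.C (R := LaurentPolynomial ℤ) (T 1) * PowerSeries.X ^ (2 * k - 1)) *
          (1 + PowerSeries.C (R := LaurentPolynomial ℤ) (T (-1)) * PowerSeries.X ^ (2 * k - 1)))) =
      ∑ m ∈ Finset.Icc (-(n : ℤ)) (n : ℤ),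
        if m ^ 2 = (n : ℤ) then T m else 0 := by
  have hsplit : (∏ k ∈ Finset.Icc 1 (n + 1),
        ((1 - (X : S) ^ (2 * k)) *
          (1 + PowerSeries.C (R := R) (T 1) * X ^ (2 * k - 1)) *
          (1 + PowerSeries.C (R := R) (T (-1)) * X ^ (2 * k - 1))))
      = (∏ k ∈ Finset.Icc 1 (n+1), (1 - (X:S) ^ (2*k)))
        * ∏ k ∈ Finset.Icc 1 (n+1),
            ((1 + PowerSeries.C (R := R) (T 1) * X ^ (2*k-1)) * (1 + PowerSeries.C (R := R) (T (-1)) * X ^ (2*k-1))) := by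
    rw [← Finset.prod_mul_distrib]
    exact Finset.prod_congr rfl fun k _ => by ring
  rw [hsplit, prod_eq (n+1), Finset.mul_sum, map_sum]
  rw [Finset.sum_congr rfl
    (fun m hm => coeff_term n m (by simp only [Finset.mem_Icc] at hm; omega))]
  symm
  apply Finset.sum_subset (Finset.Icc_subset_Icc (by push_cast; omega) (by push_cast; omega))
  intro x hx hx'
  simp only [Finset.mem_Icc] at hx hx'
  rw [if_neg]
  intro hc
  have hb : x = -((n:ℤ)+1) ∨ x = (n:ℤ)+1 := by push_cast at hx; omega
  rcases hb with rfl | rfl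
  · nlinarith [sq_nonneg ((n:ℤ))]
  · nlinarith [sq_nonneg ((n:ℤ))]
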